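/- A clause-set F is satisfiable if and only if its lean kernel is empty: F ∈ SAT ⇔ Na(F) = ∅. -/

import Mathlib

open scoped Classical

abbrev Var := ℕ
abbrev Lit := Var × Bool
abbrev Clause := Finset Lit
abbrev ClauseSet := Finset Clause
abbrev PAssign := Var → Option Bool

def Lit.neg (x : Lit) : Lit := (x.1, !x.2)

def clauseVars (C : Clause) : Finset Var := C.image Prod.fst

def csVars (F : ClauseSet) : Finset Var := F.biUnion clauseVars

def paVars (φ : PAssign) : Set Var := {v | φ v ≠ none}

def litTrue (φ : PAssign) (x : Lit) : Prop := φ x.1 = some x.2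

def litFalse (φ : PAssign) (x : Lit) : Prop := φ x.1 = some (!x.2)

def satClause (φ : PAssign) (C : Clause) : Prop := ∃ x ∈ C, litTrue φ x

def touches (φ : PAssign) (C : Clause) : Prop := ∃ x ∈ C, φ x.1 ≠ none

def isAutarky (φ : PAssign) (F : ClauseSet) : Prop := ∀ C ∈ F, touches φ C → satClause φ C

noncomputable def applyPA (φ : PAssign) (F : ClauseSet) : ClauseSet :=
  (F.filter fun C => ¬ satClause φ C).image fun C => C.filter fun x => ¬ litFalse φ x

def satCS (F : ClauseSet) : Prop := ∃ φ : PAssign, applyPA φ F = ∅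

def isLean (F : ClauseSet) : Prop :=
  ∀ φ : PAssign, isAutarky φ F → paVars φ ⊆ ↑(csVars F) → ∀ v, φ v = none

noncomputable def leanKernel (F : ClauseSet) : ClauseSet :=
  (F.powerset.filter isLean).sup id

def varAut (F : ClauseSet) : Set Var :=
  {v | ∃ φ : PAssign, isAutarky φ F ∧ paVars φ ⊆ ↑(csVars F) ∧ φ v ≠ none}

lemma applyPA_eq_empty_iff (φ : PAssign) (F : ClauseSet) :
    applyPA φ F = ∅ ↔ ∀ C ∈ F, satClause φ C := by
  unfold applyPA
  rw [Finset.image_eq_empty, Finset.filter_eq_empty_iff]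
  simp

lemma leanKernel_eq_empty_iff (F : ClauseSet) :
    leanKernel F = ∅ ↔ ∀ G ⊆ F, isLean G → G = ∅ := by
  unfold leanKernel
  rw [← Finset.bot_eq_empty, Finset.sup_eq_bot_iff]
  constructor
  · intro h G hGF hG
    exact h G (Finset.mem_filter.mpr ⟨Finset.mem_powerset.mpr hGF, hG⟩)
  · intro h G hG
    rcases Finset.mem_filter.mp hG with ⟨h1, h2⟩
    exact h G (Finset.mem_powerset.mp h1) h2

lemma mem_csVars {F : ClauseSet} {C : Clause} {x : Lit} (hC : C ∈ F) (hx : x ∈ C) :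
    x.1 ∈ csVars F :=
  Finset.mem_biUnion.mpr ⟨C, hC, Finset.mem_image.mpr ⟨x, hx, rfl⟩⟩

/-- For an autarky, application just deletes satisfied clauses. -/
lemma applyPA_autarky {φ : PAssign} {F : ClauseSet} (h : isAutarky φ F) :
    applyPA φ F = F.filter fun C => ¬ satClause φ C := by
  unfold applyPA
  have key : ∀ C ∈ F.filter (fun C => ¬ satClause φ C),
      (C.filter fun x => ¬ litFalse φ x) = C := by
    intro C hC
    rcases Finset.mem_filter.mp hC with ⟨hCF, hns⟩
    have hunt : ¬ touches φ C := fun ht => hns (h C hCF ht)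
    apply Finset.filter_eq_self.mpr
    intro x hx hlf
    exact hunt ⟨x, hx, by rw [hlf]; simp⟩
  calc (F.filter fun C => ¬ satClause φ C).image (fun C => C.filter fun x => ¬ litFalse φ x)
      = (F.filter fun C => ¬ satClause φ C).image id := Finset.image_congr key
    _ = _ := Finset.image_id

lemma kernel_empty_sat (n : ℕ) : ∀ F : ClauseSet, F.card = n →
    leanKernel F = ∅ → satCS F := by
  induction n using Nat.strong_induction_on with
  | _ n ih =>
    intro F hcard hlk
    rcases eq_or_ne F ∅ with rfl | hne
    · exact ⟨fun _ => none, (applyPA_eq_empty_iff _ _).mpr (by simp)⟩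
    · -- F is not lean, so it has a nontrivial autarky
      have hFnotlean : ¬ isLean F := by
        intro hl
        exact hne ((leanKernel_eq_empty_iff F).mp hlk F (le_refl F) hl)
      unfold isLean at hFnotlean
      push_neg at hFnotlean
      rcases hFnotlean with ⟨φ, haut, hvars, v, hv⟩
      set F' := applyPA φ F with hF'
      have hF'eq : F' = F.filter fun C => ¬ satClause φ C := applyPA_autarky haut
      have hsub : F' ⊆ F := hF'eq ▸ Finset.filter_subset _ _
      -- strict: some clause of F is satisfied by φ
      have hvF : v ∈ csVars F := hvars hv
      rcases Finset.mem_biUnion.mp hvF with ⟨C, hCF, hvC⟩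
      rcases Finset.mem_image.mp hvC with ⟨x, hxC, hxv⟩
      have hsatC : satClause φ C := haut C hCF ⟨x, hxC, by rw [hxv]; exact hv⟩
      have hCnot : C ∉ F' := by
        rw [hF'eq]
        simp [hsatC]
      have hlt : F'.card < n := by
        rw [← hcard]
        exact Finset.card_lt_card (Finset.ssubset_iff_of_subset hsub |>.mpr ⟨C, hCF, hCnot⟩)
      -- lean kernel of F' is empty
      have hlk' : leanKernel F' = ∅ := by
        rw [leanKernel_eq_empty_iff]
        intro G hG hGlean
        exact (leanKernel_eq_empty_iff F).mp hlk G (hG.trans hsub) hGlean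
      rcases ih F'.card hlt F' rfl hlk' with ⟨ψ, hψ⟩
      have hψ' := (applyPA_eq_empty_iff ψ F').mp hψ
      -- compose
      refine ⟨fun w => if φ w = none then ψ w else φ w, (applyPA_eq_empty_iff _ _).mpr ?_⟩
      intro D hDF
      by_cases hsat : satClause φ D
      · rcases hsat with ⟨y, hyD, hyt⟩
        refine ⟨y, hyD, ?_⟩
        unfold litTrue at hyt ⊢
        simp [hyt]
      · have hDF' : D ∈ F' := hF'eq ▸ Finset.mem_filter.mpr ⟨hDF, hsat⟩
        have hunt : ¬ touches φ D := fun ht => hsat (haut D hDF ht)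
        rcases hψ' D hDF' with ⟨y, hyD, hyt⟩
        refine ⟨y, hyD, ?_⟩
        have hnone : φ y.1 = none := by
          by_contra hc
          exact hunt ⟨y, hyD, hc⟩
        unfold litTrue at hyt ⊢
        simp [hnone, hyt]

theorem sat_iff_leanKernel_empty (F : ClauseSet) :
    satCS F ↔ leanKernel F = ∅ := by
  constructor
  · rintro ⟨φ, hφ⟩
    have hall := (applyPA_eq_empty_iff φ F).mp hφ
    rw [leanKernel_eq_empty_iff]
    intro G hGF hGlean
    set φ' : PAssign := fun v => if v ∈ csVars G then φ v else none with hφ'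
    have haut : isAutarky φ' G := by
      intro C hCG _
      rcases hall C (hGF hCG) with ⟨x, hxC, hxt⟩
      refine ⟨x, hxC, ?_⟩
      unfold litTrue at hxt ⊢
      simp [hφ', mem_csVars hCG hxC, hxt]
    have hvars : paVars φ' ⊆ ↑(csVars G) := by
      intro v hv
      simp only [paVars, hφ', Set.mem_setOf_eq] at hv
      by_contra hc
      rw [if_neg (fun h => hc (by simpa using h))] at hv
      exact hv rfl
    have hnone := hGlean φ' haut hvars
    by_contra hne
    rcases Finset.nonempty_of_ne_empty hne with ⟨C, hCG⟩
    rcases hall C (hGF hCG) with ⟨x, hxC, hxt⟩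
    have : φ' x.1 = some x.2 := by
      simp [hφ', mem_csVars hCG hxC]; exact hxt
    rw [hnone x.1] at this
    exact Option.some_ne_none _ this.symm
  · exact fun h => kernel_empty_sat F.card F rfl h
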